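/- Let X, Y be NUTS and t a NUTS morphism X → Y. Then !t = {([a₁,…,aₙ],[b₁,…,bₙ]) | ∀i (aᵢ,bᵢ) ∈ t} is a NUTS morphism !X → !Y. Moreover the dereliction relation der_X = {([a],a) | a ∈ |X|} is a NUTS morphism !X → X and the digging relation dig_X = {(m₁+⋯+mₙ, [m₁,…,mₙ]) | mᵢ ∈ Mfin(|X|)} is a NUTS morphism !X → !!X. -/
import Mathlib


/-- Orthogonal of a set of subsets: nonempty-intersection duality. -/
def orth {α : Type*} (T : Set (Set α)) : Set (Set α) :=
  {u' : Set α | ∀ u ∈ T, (u ∩ u').Nonempty}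

/-- Direct image of a set under a relation. -/
def relIm {α β : Type*} (t : Set (α × β)) (u : Set α) : Set β :=
  {b | ∃ a ∈ u, (a, b) ∈ t}

/-- The condition for a relation to be a NUTS morphism: it maps total sets
to total sets under direct image. -/
def isTot {α β : Type*} (TX : Set (Set α)) (TY : Set (Set β)) (t : Set (α × β)) : Prop :=
  ∀ u ∈ TX, relIm t u ∈ TY

/-- Totality of the tensor product: the upward closure of the set of products
of total sets. -/
def tensT {α β : Type*} (TX : Set (Set α)) (TY : Set (Set β)) : Set (Set (α × β)) :=
  {w | ∃ u ∈ TX, ∃ v ∈ TY, u ×ˢ v ⊆ w}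

/-- Totality of the linear arrow `X ⊸ Y = (X ⊗ Y⊥)⊥`. -/
def limplT {α β : Type*} (TX : Set (Set α)) (TY : Set (Set β)) : Set (Set (α × β)) :=
  orth (tensT TX (orth TY))

/-- `u^! = Mfin(u)`. -/
def mfin {α : Type*} (u : Set α) : Set (Multiset α) :=
  {m | ∀ a ∈ m, a ∈ u}

/-- Totality of `!X`: the upward closure of `{u^! | u ∈ 𝒯(X)}`. -/
def bangT {α : Type*} (TX : Set (Set α)) : Set (Set (Multiset α)) :=
  {w | ∃ u ∈ TX, mfin u ⊆ w}

/-- Action of `!` on relations: `!t` relates `[a₁,…,aₙ]` to `[b₁,…,bₙ]`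
when `(aᵢ,bᵢ) ∈ t` for all `i`. -/
def bangRel {α β : Type*} (t : Set (α × β)) : Set (Multiset α × Multiset β) :=
  {p | Multiset.Rel (fun a b => (a, b) ∈ t) p.1 p.2}

private lemma choose_rel {α β : Type*} {t : Set (α × β)} {u : Set α}
    (m : Multiset β) (h : ∀ b ∈ m, ∃ a ∈ u, (a, b) ∈ t) :
    ∃ m' : Multiset α, (∀ a ∈ m', a ∈ u) ∧
      Multiset.Rel (fun a b => (a, b) ∈ t) m' m := by
  induction m using Multiset.induction with
  | empty => exact ⟨0, by simp, by simp⟩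
  | cons b m ih =>
    obtain ⟨a, ha, hab⟩ := h b (Multiset.mem_cons_self b m)
    obtain ⟨m', hm'u, hm'r⟩ := ih (fun b' hb' => h b' (Multiset.mem_cons_of_mem hb'))
    exact ⟨a ::ₘ m', fun x hx => by
      rcases Multiset.mem_cons.mp hx with h | h
      · exact h ▸ ha
      · exact hm'u x h, Multiset.Rel.cons hab hm'r⟩

private lemma mem_of_mem_sum {α : Type*} {M : Multiset (Multiset α)} {a : α}
    (h : a ∈ M.sum) : ∃ m ∈ M, a ∈ m := by
  induction M using Multiset.induction with
  | empty => simp at h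
  | cons m M ih =>
    rw [Multiset.sum_cons, Multiset.mem_add] at h
    rcases h with h | h
    · exact ⟨m, Multiset.mem_cons_self m M, h⟩
    · obtain ⟨m', h1, h2⟩ := ih h
      exact ⟨m', Multiset.mem_cons_of_mem h1, h2⟩

private lemma orth_up {α : Type*} {S : Set (Set α)} {u v : Set α}
    (h : u ∈ orth S) (huv : u ⊆ v) : v ∈ orth S := by
  intro w hw
  obtain ⟨x, hx1, hx2⟩ := h w hw
  exact ⟨x, hx1, huv hx2⟩

/-- If `t : X → Y` is a NUTS morphism then `!t : !X → !Y` is one; moreover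
dereliction `der_X : !X → X` and digging `dig_X : !X → !!X` are NUTS
morphisms. -/
theorem bang_der_dig_morphisms {α β : Type*} (TX : Set (Set α)) (TY : Set (Set β))
    (hX : TX = orth (orth TX)) (hY : TY = orth (orth TY)) :
    (∀ t : Set (α × β), isTot TX TY t → isTot (bangT TX) (bangT TY) (bangRel t)) ∧
    isTot (bangT TX) TX {p : Multiset α × α | p.1 = {p.2}} ∧
    isTot (bangT TX) (bangT (bangT TX))
      {p : Multiset α × Multiset (Multiset α) | p.1 = p.2.sum} := by
  refine ⟨?_, ?_, ?_⟩
  · intro t ht u' ⟨u, hu, hmu⟩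
    refine ⟨relIm t u, ht u hu, ?_⟩
    intro m hm
    obtain ⟨m', hm'u, hm'r⟩ := choose_rel m hm
    exact ⟨m', hmu hm'u, hm'r⟩
  · intro u' ⟨u, hu, hmu⟩
    rw [hX]
    refine orth_up (hX ▸ hu) ?_
    intro a ha
    exact ⟨{a}, hmu (by simpa [mfin] using ha), rfl⟩
  · intro u' ⟨u, hu, hmu⟩
    refine ⟨mfin u, ⟨u, hu, le_refl _⟩, ?_⟩
    intro M hM
    refine ⟨M.sum, hmu ?_, rfl⟩
    intro a ha
    obtain ⟨m, hmM, ham⟩ := mem_of_mem_sum ha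
    exact hM m hmM a ham
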